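/- Let G be a connected k-uniform hypergraph on {1,…,n} with at least one edge. A nonzero vector x ∈ ℂ^n satisfies ((D−A) x^{k−1})_i = 0 for all i if and only if there exist a nonzero γ ∈ ℂ and integers α_1,…,α_n such that x_i = γ·exp(2πα_i√(−1)/k) for all i, and for every edge e ∈ E the sum Σ_{j∈e} α_j is divisible by k. -/

import Mathlib

open Finset

/-- Degree of vertex `i` in the hypergraph with edge set `E`. -/
def hdeg {n : ℕ} (E : Finset (Finset (Fin n))) (i : Fin n) : ℕ :=
  (E.filter fun e => i ∈ e).card

/-- Laplacian tensor action `((D - A) x^{k-1})_i` over ℂ. -/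
noncomputable def lapC (k : ℕ) {n : ℕ} (E : Finset (Finset (Fin n)))
    (x : Fin n → ℂ) (i : Fin n) : ℂ :=
  (hdeg E i : ℂ) * x i ^ (k - 1) -
    ∑ e ∈ E.filter (fun e => i ∈ e), ∏ j ∈ e.erase i, x j

/-- Signless Laplacian tensor action `((D + A) x^{k-1})_i` over ℂ. -/
noncomputable def slapC (k : ℕ) {n : ℕ} (E : Finset (Finset (Fin n)))
    (x : Fin n → ℂ) (i : Fin n) : ℂ :=
  (hdeg E i : ℂ) * x i ^ (k - 1) +
    ∑ e ∈ E.filter (fun e => i ∈ e), ∏ j ∈ e.erase i, x j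

/-- Laplacian tensor action `((D - A) x^{k-1})_i` over ℝ. -/
noncomputable def lapR (k : ℕ) {n : ℕ} (E : Finset (Finset (Fin n)))
    (x : Fin n → ℝ) (i : Fin n) : ℝ :=
  (hdeg E i : ℝ) * x i ^ (k - 1) -
    ∑ e ∈ E.filter (fun e => i ∈ e), ∏ j ∈ e.erase i, x j

/-- Signless Laplacian tensor action `((D + A) x^{k-1})_i` over ℝ. -/
noncomputable def slapR (k : ℕ) {n : ℕ} (E : Finset (Finset (Fin n)))
    (x : Fin n → ℝ) (i : Fin n) : ℝ :=
  (hdeg E i : ℝ) * x i ^ (k - 1) +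
    ∑ e ∈ E.filter (fun e => i ∈ e), ∏ j ∈ e.erase i, x j

/-- The hypergraph with edge set `E` is connected: every pair of distinct vertices is
joined by a chain of edges with consecutive edges intersecting. -/
def HConnected {n : ℕ} (E : Finset (Finset (Fin n))) : Prop :=
  ∀ i j : Fin n, i ≠ j → ∃ m : ℕ, ∃ es : Fin (m + 1) → Finset (Fin n),
    (∀ r, es r ∈ E) ∧ i ∈ es 0 ∧ j ∈ es (Fin.last m) ∧
    ∀ r : Fin m, (es r.castSucc ∩ es r.succ).Nonempty

noncomputable def Complex.abs : AbsoluteValue ℂ ℝ where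
  toFun := fun z => ‖z‖
  map_mul' := norm_mul
  nonneg' := norm_nonneg
  eq_zero' := fun _ => norm_eq_zero
  add_le' := norm_add_le

theorem Complex.abs_conj (z : ℂ) : Complex.abs ((starRingEnd ℂ) z) = Complex.abs z :=
  Complex.norm_conj z

theorem Complex.re_le_abs (z : ℂ) : z.re ≤ Complex.abs z := Complex.re_le_norm z

theorem Complex.normSq_eq_abs (z : ℂ) : Complex.normSq z = Complex.abs z ^ 2 :=
  Complex.normSq_eq_norm_sq z

theorem Complex.sq_abs (z : ℂ) : Complex.abs z ^ 2 = Complex.normSq z := Complex.sq_norm z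

private lemma key_edge {n k : ℕ} (hk : 3 ≤ k) {E : Finset (Finset (Fin n))}
    (hE : ∀ e ∈ E, e.card = k) {x : Fin n → ℂ} {M : ℝ}
    (hMmax : ∀ j, Complex.abs (x j) ≤ M) (hM0 : 0 < M)
    (hlap : ∀ i, lapC k E x i = 0)
    {i : Fin n} {e : Finset (Fin n)} (he : e ∈ E) (hie : i ∈ e)
    (hiM : Complex.abs (x i) = M) :
    (∀ j ∈ e, Complex.abs (x j) = M) ∧ ∏ j ∈ e, x j = x i ^ k := by
  set w := x i ^ (k - 1) with hw
  have habsw : Complex.abs w = M ^ (k - 1) := by rw [hw, map_pow, hiM]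
  have hMk0 : (0:ℝ) < M ^ (k - 1) := pow_pos hM0 _
  set F := E.filter (fun e => i ∈ e) with hF
  have heF : e ∈ F := Finset.mem_filter.mpr ⟨he, hie⟩
  have hsum : ∑ e' ∈ F, ∏ j ∈ e'.erase i, x j = (hdeg E i : ℂ) * w := by
    have h := hlap i
    unfold lapC at h
    rw [sub_eq_zero] at h
    exact h.symm
  have hbound : ∀ e' ∈ F, Complex.abs (∏ j ∈ e'.erase i, x j) ≤ M ^ (k - 1) := by
    intro e' he'
    obtain ⟨he'E, hie'⟩ := Finset.mem_filter.mp he'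
    have hcard : (e'.erase i).card = k - 1 := by
      rw [Finset.card_erase_of_mem hie', hE e' he'E]
    rw [map_prod]
    calc ∏ j ∈ e'.erase i, Complex.abs (x j) ≤ ∏ _j ∈ e'.erase i, M :=
        Finset.prod_le_prod (fun j _ => AbsoluteValue.nonneg _ _) (fun j _ => hMmax j)
      _ = M ^ (k - 1) := by rw [Finset.prod_const, hcard]
  have habsle : ∀ e' ∈ F, Complex.abs ((starRingEnd ℂ) w * ∏ j ∈ e'.erase i, x j)
      ≤ M ^ (k-1) * M ^ (k-1) := by
    intro e' he'
    rw [map_mul, Complex.abs_conj, habsw]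
    exact mul_le_mul_of_nonneg_left (hbound e' he') (le_of_lt hMk0)
  have hnn : ∀ e' ∈ F,
      0 ≤ M ^ (k-1) * M ^ (k-1) - ((starRingEnd ℂ) w * ∏ j ∈ e'.erase i, x j).re := by
    intro e' he'
    have h1 := (Complex.re_le_abs ((starRingEnd ℂ) w * ∏ j ∈ e'.erase i, x j)).trans
      (habsle e' he')
    linarith
  have hww : (starRingEnd ℂ) w * w = ((M ^ (k-1) * M ^ (k-1) : ℝ) : ℂ) := by
    rw [mul_comm, Complex.mul_conj, Complex.normSq_eq_abs, habsw]
    push_cast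
    ring
  have hzero : ∑ e' ∈ F,
      (M ^ (k-1) * M ^ (k-1) - ((starRingEnd ℂ) w * ∏ j ∈ e'.erase i, x j).re) = 0 := by
    rw [Finset.sum_sub_distrib, Finset.sum_const]
    have h2 : ∑ e' ∈ F, ((starRingEnd ℂ) w * ∏ j ∈ e'.erase i, x j).re
        = ((starRingEnd ℂ) w * ∑ e' ∈ F, ∏ j ∈ e'.erase i, x j).re := by
      rw [Finset.mul_sum, Complex.re_sum]
    have h3 : (starRingEnd ℂ) w * ((hdeg E i : ℂ) * w)
        = (((hdeg E i : ℝ) * (M ^ (k-1) * M ^ (k-1)) : ℝ) : ℂ) := by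
      rw [mul_left_comm, hww]
      push_cast
      ring
    rw [h2, hsum, h3, Complex.ofReal_re]
    have hcardF : F.card = hdeg E i := rfl
    rw [hcardF, nsmul_eq_mul]
    ring
  have heach := (Finset.sum_eq_zero_iff_of_nonneg hnn).mp hzero e heF
  set fe := ∏ j ∈ e.erase i, x j with hfe
  have hre : ((starRingEnd ℂ) w * fe).re = M ^ (k-1) * M ^ (k-1) := by linarith
  have habs_eq : Complex.abs ((starRingEnd ℂ) w * fe) = M ^ (k-1) * M ^ (k-1) :=
    le_antisymm (habsle e heF) (by rw [← hre]; exact Complex.re_le_abs _)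
  have hfeabs : Complex.abs fe = M ^ (k-1) := by
    have h4 : Complex.abs ((starRingEnd ℂ) w) * Complex.abs fe = M ^ (k-1) * M ^ (k-1) := by
      rw [← map_mul]; exact habs_eq
    rw [Complex.abs_conj, habsw] at h4
    exact mul_left_cancel₀ (ne_of_gt hMk0) h4
  have him : ((starRingEnd ℂ) w * fe).im = 0 := by
    have h5 : Complex.abs ((starRingEnd ℂ) w * fe) ^ 2
        = ((starRingEnd ℂ) w * fe).re ^ 2 + ((starRingEnd ℂ) w * fe).im ^ 2 := by
      rw [Complex.sq_abs, Complex.normSq_apply]; ring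
    rw [habs_eq, hre] at h5
    have h6 : ((starRingEnd ℂ) w * fe).im ^ 2 = 0 := by linarith
    exact pow_eq_zero_iff two_ne_zero |>.mp h6
  have hz : (starRingEnd ℂ) w * fe = ((M ^ (k-1) * M ^ (k-1) : ℝ) : ℂ) := by
    apply Complex.ext
    · rw [hre, Complex.ofReal_re]
    · rw [him, Complex.ofReal_im]
  have hw0 : w ≠ 0 := by
    intro h
    rw [h, map_zero] at habsw
    exact absurd habsw.symm (ne_of_gt hMk0)
  have hfw : fe = w := mul_left_cancel₀ (star_ne_zero.mpr hw0) (hz.trans hww.symm)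
  have herase : ∀ j ∈ e.erase i, Complex.abs (x j) = M := by
    intro j hj
    by_contra hne
    have hlt : Complex.abs (x j) < M := lt_of_le_of_ne (hMmax j) hne
    have hprodlt : ∏ l ∈ e.erase i, Complex.abs (x l) < M ^ (k-1) := by
      rw [← Finset.mul_prod_erase _ _ hj]
      have hcard2 : ((e.erase i).erase j).card = k - 2 := by
        rw [Finset.card_erase_of_mem hj, Finset.card_erase_of_mem hie, hE e he]
        omega
      have h1 : ∏ l ∈ (e.erase i).erase j, Complex.abs (x l) ≤ M ^ (k-2) := by
        calc ∏ l ∈ (e.erase i).erase j, Complex.abs (x l) ≤ ∏ _l ∈ (e.erase i).erase j, M :=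
            Finset.prod_le_prod (fun l _ => AbsoluteValue.nonneg _ _) (fun l _ => hMmax l)
          _ = M ^ (k-2) := by rw [Finset.prod_const, hcard2]
      calc Complex.abs (x j) * ∏ l ∈ (e.erase i).erase j, Complex.abs (x l)
          ≤ Complex.abs (x j) * M ^ (k-2) :=
            mul_le_mul_of_nonneg_left h1 (AbsoluteValue.nonneg _ _)
        _ < M * M ^ (k-2) := mul_lt_mul_of_pos_right hlt (pow_pos hM0 _)
        _ = M ^ (k-1) := by rw [← pow_succ']; congr 1; omega
    rw [← map_prod, ← hfe, hfeabs] at hprodlt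
    exact lt_irrefl _ hprodlt
  constructor
  · intro j hj
    rcases eq_or_ne j i with rfl | hji
    · exact hiM
    · exact herase j (Finset.mem_erase.mpr ⟨hji, hj⟩)
  · rw [← Finset.mul_prod_erase e x hie, ← hfe, hfw, hw, ← pow_succ']
    congr 1
    omega

private lemma spread {n : ℕ} {E : Finset (Finset (Fin n))} (hconn : HConnected E)
    (P : Fin n → Prop)
    (hstep : ∀ e ∈ E, ∀ i ∈ e, P i → ∀ j ∈ e, P j)
    {i₀ : Fin n} (h0 : P i₀) : ∀ j, P j := by
  intro j
  rcases eq_or_ne i₀ j with rfl | hji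
  · exact h0
  obtain ⟨m, es, hesE, hi0, hjlast, hinter⟩ := hconn i₀ j hji
  have claim : ∀ r : ℕ, ∀ hr : r < m + 1, ∀ v ∈ es ⟨r, hr⟩, P v := by
    intro r
    induction r with
    | zero =>
        intro hr v hv
        rw [Fin.mk_zero] at hv
        exact hstep (es 0) (hesE 0) i₀ hi0 h0 v hv
    | succ r ih =>
        intro hr v hv
        have hrm : r < m := by omega
        obtain ⟨u, hu⟩ := hinter ⟨r, hrm⟩
        rw [Finset.mem_inter, Fin.castSucc_mk, Fin.succ_mk] at hu
        have hPu : P u := ih (by omega) u hu.1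
        exact hstep (es ⟨r+1, hr⟩) (hesE _) u hu.2 hPu v hv
  exact claim m (by omega) j hjlast

private lemma mem_edge {n : ℕ} {E : Finset (Finset (Fin n))} (hn3 : 3 ≤ n)
    (hconn : HConnected E) (i : Fin n) : ∃ e ∈ E, i ∈ e := by
  have h0 : (0:ℕ) < n := by omega
  have h1 : (1:ℕ) < n := by omega
  by_cases hi : i = ⟨0, h0⟩
  · obtain ⟨m, es, hesE, hi0, _, _⟩ := hconn i ⟨1, h1⟩ (by rw [hi]; exact fun h => by simp [Fin.ext_iff] at h)
    exact ⟨es 0, hesE 0, hi0⟩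
  · obtain ⟨m, es, hesE, hi0, _, _⟩ := hconn i ⟨0, h0⟩ hi
    exact ⟨es 0, hesE 0, hi0⟩

private lemma hexp1 {k : ℕ} (hk0 : k ≠ 0) (S : ℤ) (hd : (k:ℤ) ∣ S) :
    Complex.exp (2 * Real.pi * (S:ℂ) * Complex.I / k) = 1 := by
  obtain ⟨t, rfl⟩ := hd
  rw [Complex.exp_eq_one_iff]
  refine ⟨t, ?_⟩
  have hkC : (k:ℂ) ≠ 0 := Nat.cast_ne_zero.mpr hk0
  field_simp
  push_cast
  ring

private lemma hprod {n k : ℕ} (e : Finset (Fin n)) (hcard : e.card = k)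
    (γ : ℂ) (α : Fin n → ℤ) :
    ∏ j ∈ e, (γ * Complex.exp (2 * Real.pi * (α j : ℂ) * Complex.I / k))
      = γ ^ k * Complex.exp (2 * Real.pi * ((∑ j ∈ e, α j : ℤ) : ℂ) * Complex.I / k) := by
  rw [Finset.prod_mul_distrib, Finset.prod_const, hcard, ← Complex.exp_sum]
  congr 2
  rw [Finset.sum_congr rfl (fun j _ => by ring :
    ∀ j ∈ e, 2 * (Real.pi:ℂ) * (α j : ℂ) * Complex.I / k
      = (α j : ℂ) * (2 * Real.pi * Complex.I / k)), ← Finset.sum_mul]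
  push_cast
  ring

theorem stmt_4 {n k : ℕ} (hk : 3 ≤ k) (hn : k ≤ n)
    (E : Finset (Finset (Fin n))) (hE : ∀ e ∈ E, e.card = k)
    (hconn : HConnected E) (hne : E.Nonempty)
    (x : Fin n → ℂ) :
    (x ≠ 0 ∧ ∀ i, lapC k E x i = 0) ↔
      ∃ γ : ℂ, γ ≠ 0 ∧ ∃ α : Fin n → ℤ,
        (∀ i, x i = γ * Complex.exp (2 * Real.pi * (α i : ℂ) * Complex.I / k)) ∧
        (∀ e ∈ E, (k : ℤ) ∣ ∑ j ∈ e, α j) := by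
  constructor
  · rintro ⟨hx0, hlap⟩
    have hn3 : 3 ≤ n := le_trans hk hn
    have hk0 : k ≠ 0 := by omega
    have hneU : (Finset.univ : Finset (Fin n)).Nonempty := ⟨⟨0, by omega⟩, Finset.mem_univ _⟩
    obtain ⟨i₀, -, hmax⟩ := Finset.exists_max_image Finset.univ
      (fun j => Complex.abs (x j)) hneU
    set M := Complex.abs (x i₀) with hM
    have hMmax : ∀ j, Complex.abs (x j) ≤ M := fun j => hmax j (Finset.mem_univ j)
    have hM0 : 0 < M := by
      obtain ⟨j, hj⟩ := Function.ne_iff.mp hx0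
      have hj' : x j ≠ 0 := by simpa using hj
      exact lt_of_lt_of_le (AbsoluteValue.pos Complex.abs hj') (hMmax j)
    set P : Fin n → Prop := fun j => Complex.abs (x j) = M ∧ x j ^ k = x i₀ ^ k with hP
    have hstep : ∀ e ∈ E, ∀ i ∈ e, P i → ∀ j ∈ e, P j := by
      rintro e he i hie ⟨hiM, hik⟩ j hje
      obtain ⟨hall, hprodI⟩ := key_edge hk hE hMmax hM0 hlap he hie hiM
      have hjM := hall j hje
      obtain ⟨-, hprodJ⟩ := key_edge hk hE hMmax hM0 hlap he hje hjM
      exact ⟨hjM, by rw [← hprodJ, hprodI, hik]⟩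
    have hPall : ∀ j, P j := spread hconn P hstep ⟨rfl, rfl⟩
    set γ := x i₀ with hγ
    have hγ0 : γ ≠ 0 := by
      intro h
      have hM' : M = 0 := by rw [hM, h, map_zero]
      linarith
    haveI : NeZero k := ⟨hk0⟩
    have hprim := Complex.isPrimitiveRoot_exp k hk0
    have hroot : ∀ i, ∃ m : ℕ,
        Complex.exp (2 * Real.pi * Complex.I / k) ^ m = x i * γ⁻¹ := by
      intro i
      have hxik : (x i * γ⁻¹) ^ k = 1 := by
        rw [mul_pow, (hPall i).2, inv_pow, mul_inv_cancel₀ (pow_ne_zero k hγ0)]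
      obtain ⟨m, -, hm⟩ := hprim.eq_pow_of_pow_eq_one hxik
      exact ⟨m, hm⟩
    choose mm hmm using hroot
    have hxrep : ∀ i, x i = γ * Complex.exp (2 * Real.pi * ((mm i : ℤ) : ℂ) * Complex.I / k) := by
      intro i
      have h := hmm i
      rw [← Complex.exp_nat_mul] at h
      have harg : ((mm i : ℕ) : ℂ) * (2 * Real.pi * Complex.I / k)
          = 2 * Real.pi * (((mm i : ℕ) : ℤ) : ℂ) * Complex.I / k := by push_cast; ring
      rw [harg] at h
      rw [h]
      field_simp
    refine ⟨γ, hγ0, fun i => (mm i : ℤ), hxrep, ?_⟩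
    intro e he
    have hecard : e.card = k := hE e he
    obtain ⟨i, hie⟩ := Finset.card_pos.mp (by rw [hecard]; omega)
    have hPe := key_edge hk hE hMmax hM0 hlap he hie (hPall i).1
    have hprodE : ∏ j ∈ e, x j = γ ^ k := by rw [hPe.2, (hPall i).2]
    rw [Finset.prod_congr rfl (fun j _ => hxrep j), hprod e hecard γ _] at hprodE
    have hexp : Complex.exp (2 * Real.pi * ((∑ j ∈ e, (mm j : ℤ) : ℤ) : ℂ) * Complex.I / k) = 1 :=
      mul_left_cancel₀ (pow_ne_zero k hγ0) (hprodE.trans (mul_one _).symm)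
    rw [Complex.exp_eq_one_iff] at hexp
    obtain ⟨t, ht⟩ := hexp
    refine ⟨t, ?_⟩
    have hkC : (k : ℂ) ≠ 0 := Nat.cast_ne_zero.mpr hk0
    have h2pI : (2 * (Real.pi : ℂ) * Complex.I) ≠ 0 := by
      refine mul_ne_zero (mul_ne_zero two_ne_zero ?_) Complex.I_ne_zero
      exact Complex.ofReal_ne_zero.mpr Real.pi_ne_zero
    have ht' : 2 * (Real.pi : ℂ) * ((∑ j ∈ e, (mm j : ℤ) : ℤ) : ℂ) * Complex.I
        = (t : ℂ) * (2 * Real.pi * Complex.I) * k := by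
      have h := congrArg (fun z => z * (k : ℂ)) ht
      simpa [div_mul_cancel₀, hkC] using h
    have h3 : (2 * (Real.pi : ℂ) * Complex.I) * ((∑ j ∈ e, (mm j : ℤ) : ℤ) : ℂ)
        = (2 * (Real.pi : ℂ) * Complex.I) * ((t : ℂ) * k) := by linear_combination ht'
    have h4 := mul_left_cancel₀ h2pI h3
    have h5 : (∑ j ∈ e, (mm j : ℤ)) = t * k := by exact_mod_cast h4
    show (∑ j ∈ e, (mm j : ℤ)) = (k:ℤ) * t
    rw [h5]; ring
  · rintro ⟨γ, hγ0, α, hx, hdiv⟩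
    have hk0 : k ≠ 0 := by omega
    have hkC : (k : ℂ) ≠ 0 := Nat.cast_ne_zero.mpr hk0
    have hxne : ∀ i, x i ≠ 0 := fun i => by
      rw [hx i]; exact mul_ne_zero hγ0 (Complex.exp_ne_zero _)
    have hxk : ∀ i, x i ^ k = γ ^ k := by
      intro i
      rw [hx i, mul_pow, ← Complex.exp_nat_mul]
      have harg : (k : ℂ) * (2 * Real.pi * (α i : ℂ) * Complex.I / k)
          = 2 * Real.pi * ((k * α i : ℤ) : ℂ) * Complex.I / k := by
        push_cast
        field_simp
      rw [harg, hexp1 hk0 _ (dvd_mul_right _ _), mul_one]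
    constructor
    · intro h0
      exact hxne ⟨0, by omega⟩ (by simpa using congrFun h0 ⟨0, by omega⟩)
    · intro i
      unfold lapC
      rw [sub_eq_zero]
      have hterm : ∀ e ∈ E.filter (fun e => i ∈ e), ∏ j ∈ e.erase i, x j = x i ^ (k - 1) := by
        intro e he'
        obtain ⟨heE, hie⟩ := Finset.mem_filter.mp he'
        have hprodE : ∏ j ∈ e, x j = γ ^ k := by
          rw [Finset.prod_congr rfl (fun j _ => hx j), hprod e (hE e heE) γ α,
            hexp1 hk0 _ (hdiv e heE), mul_one]
        have h1 : x i * ∏ j ∈ e.erase i, x j = x i * x i ^ (k - 1) := by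
          rw [Finset.mul_prod_erase e x hie, hprodE, ← hxk i, ← pow_succ']
          congr 1
          omega
        exact mul_left_cancel₀ (hxne i) h1
      rw [Finset.sum_congr rfl hterm, Finset.sum_const, nsmul_eq_mul]
      rfl
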